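/- Let R be a nonnegative random variable satisfying the distributional equation R =_d Q + M·R' where R' has the same law as R and is independent of the pair (M, Q), with M, Q ≥ 0. Let q > 0 with ‖M‖_q := (E[M^q])^{1/q} < 1 and ‖Q‖_q < ∞. Then ‖R‖_q ≤ ‖Q‖_q / (1 - ‖M‖_q), i.e. E[R^q] ≤ (E[Q^q])^{1/q} (1 - (E[M^q])^{1/q})^{-1} raised to the power q. -/

import Mathlib

set_option maxHeartbeats 1000000

open MeasureTheory ProbabilityTheory Real Filter
open scoped ENNReal NNReal

namespace Stmt7Aux

variable {Ω : Type*} [MeasurableSpace Ω]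

noncomputable def Tker (μ : Measure Ω) (M : Ω → ℝ) (q : ℝ) (G : ℝ → ℝ≥0∞) (t : ℝ) : ℝ≥0∞ :=
  ∫⁻ ω, (ENNReal.ofReal (M ω)) ^ q * G (t / M ω) ∂μ

lemma rpow_rpow_inv {x : ℝ≥0∞} {q : ℝ} (hq : q ≠ 0) : (x ^ q) ^ (1/q) = x := by
  rw [← ENNReal.rpow_mul, mul_one_div_cancel hq, ENNReal.rpow_one]

lemma rpow_inv_rpow {x : ℝ≥0∞} {q : ℝ} (hq : q ≠ 0) : (x ^ (1/q)) ^ q = x := by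
  rw [← ENNReal.rpow_mul, one_div_mul_cancel hq, ENNReal.rpow_one]

lemma measurable_ennrpow {α : Type*} [MeasurableSpace α] {f : α → ℝ≥0∞} (hf : Measurable f)
    (q : ℝ) : Measurable fun ω => f ω ^ q :=
  (ENNReal.continuous_rpow_const.measurable).comp hf

lemma Tker_mono_fun (μ : Measure Ω) (M : Ω → ℝ) (q : ℝ) {G G' : ℝ → ℝ≥0∞}
    (h : ∀ s, G s ≤ G' s) (t : ℝ) : Tker μ M q G t ≤ Tker μ M q G' t :=
  lintegral_mono fun ω => mul_le_mul_right (h _) _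

lemma Tker_monotone (μ : Measure Ω) {M : Ω → ℝ} (hMnn : ∀ ω, 0 ≤ M ω) (q : ℝ)
    {G : ℝ → ℝ≥0∞} (hG : Monotone G) : Monotone (Tker μ M q G) := fun t₁ t₂ h =>
  lintegral_mono fun ω => mul_le_mul_right (hG (div_le_div_of_nonneg_right h (hMnn ω))) _

lemma Tker_iterate_monotone (μ : Measure Ω) {M : Ω → ℝ} (hMnn : ∀ ω, 0 ≤ M ω) (q : ℝ)
    {G : ℝ → ℝ≥0∞} (hG : Monotone G) (k : ℕ) : Monotone ((Tker μ M q)^[k] G) := by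
  induction k with
  | zero => exact hG
  | succ k ih =>
    rw [Function.iterate_succ_apply']
    exact Tker_monotone μ hMnn q ih

lemma Tker_iterate_mono_fun (μ : Measure Ω) (M : Ω → ℝ) (q : ℝ) {G G' : ℝ → ℝ≥0∞}
    (h : ∀ s, G s ≤ G' s) (k : ℕ) : ∀ t, (Tker μ M q)^[k] G t ≤ (Tker μ M q)^[k] G' t := by
  induction k with
  | zero => exact h
  | succ k ih =>
    intro t
    rw [Function.iterate_succ_apply', Function.iterate_succ_apply']
    exact Tker_mono_fun μ M q ih t

/-- Minkowski-type inequality for the operator `Tker`. -/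
lemma Tker_minkowski (μ : Measure Ω) [IsProbabilityMeasure μ]
    {M : Ω → ℝ} (hMmeas : Measurable M)
    {q : ℝ} (hq : 1 ≤ q)
    {G H : ℝ → ℝ≥0∞} (hH : Measurable H) (α : ℝ≥0∞)
    (hGH : ∀ s, G s ≤ (α + (H s) ^ (1/q)) ^ q) (t : ℝ) :
    Tker μ M q G t ≤
      (α * (∫⁻ ω, (ENNReal.ofReal (M ω)) ^ q ∂μ) ^ (1/q) + (Tker μ M q H t) ^ (1/q)) ^ q := by
  have hq0 : (0:ℝ) < q := lt_of_lt_of_le zero_lt_one hq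
  have hqne : q ≠ 0 := ne_of_gt hq0
  set f : Ω → ℝ≥0∞ := fun ω => α * ENNReal.ofReal (M ω) with hf
  set g : Ω → ℝ≥0∞ := fun ω => ((ENNReal.ofReal (M ω)) ^ q * H (t / M ω)) ^ (1/q) with hg
  have hfm : Measurable f := hMmeas.ennreal_ofReal.const_mul α
  have hHM : Measurable fun ω => H (t / M ω) := hH.comp (measurable_const.div hMmeas)
  have hgm : Measurable g :=
    measurable_ennrpow ((measurable_ennrpow hMmeas.ennreal_ofReal q).mul hHM) (1/q)
  have hpt : ∀ ω, (ENNReal.ofReal (M ω)) ^ q * G (t / M ω) ≤ (f ω + g ω) ^ q := by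
    intro ω
    calc (ENNReal.ofReal (M ω)) ^ q * G (t / M ω)
        ≤ (ENNReal.ofReal (M ω)) ^ q * (α + (H (t / M ω)) ^ (1/q)) ^ q :=
          mul_le_mul_right (hGH _) _
      _ = (ENNReal.ofReal (M ω) * (α + (H (t / M ω)) ^ (1/q))) ^ q :=
          (ENNReal.mul_rpow_of_nonneg _ _ hq0.le).symm
      _ = (f ω + g ω) ^ q := by
          congr 1
          rw [mul_add, hf, hg]
          simp only []
          rw [mul_comm (ENNReal.ofReal (M ω)) α]
          congr 1
          rw [ENNReal.mul_rpow_of_nonneg _ _ (by positivity : (0:ℝ) ≤ 1/q),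
            rpow_rpow_inv hqne]
  calc Tker μ M q G t ≤ ∫⁻ ω, (f ω + g ω) ^ q ∂μ := lintegral_mono hpt
    _ = ((∫⁻ ω, ((f + g) ω) ^ q ∂μ) ^ (1/q)) ^ q := by
        rw [rpow_inv_rpow hqne]; rfl
    _ ≤ ((∫⁻ ω, f ω ^ q ∂μ) ^ (1/q) + (∫⁻ ω, g ω ^ q ∂μ) ^ (1/q)) ^ q := by
        apply ENNReal.rpow_le_rpow _ hq0.le
        exact ENNReal.lintegral_Lp_add_le hfm.aemeasurable hgm.aemeasurable hq
    _ = (α * (∫⁻ ω, (ENNReal.ofReal (M ω)) ^ q ∂μ) ^ (1/q) + (Tker μ M q H t) ^ (1/q)) ^ q := by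
        have h1 : (∫⁻ ω, f ω ^ q ∂μ) ^ (1/q)
            = α * (∫⁻ ω, (ENNReal.ofReal (M ω)) ^ q ∂μ) ^ (1/q) := by
          have he : (∫⁻ ω, f ω ^ q ∂μ) = α ^ q * ∫⁻ ω, (ENNReal.ofReal (M ω)) ^ q ∂μ := by
            rw [← lintegral_const_mul _ (measurable_ennrpow hMmeas.ennreal_ofReal q)]
            exact lintegral_congr fun ω => ENNReal.mul_rpow_of_nonneg _ _ hq0.le
          rw [he, ENNReal.mul_rpow_of_nonneg _ _ (by positivity : (0:ℝ) ≤ 1/q),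
            rpow_rpow_inv hqne]
        have h2 : (∫⁻ ω, g ω ^ q ∂μ) = Tker μ M q H t :=
          lintegral_congr fun ω => rpow_inv_rpow hqne
        rw [h1, h2]

/-- Key decay estimate for iterates of `Tker` applied to the bounding function. -/
lemma Tker_iterate_tail (μ : Measure Ω) [IsProbabilityMeasure μ]
    (R : Ω → ℝ) {M : Ω → ℝ} (hMmeas : Measurable M) (hMnn : ∀ ω, 0 ≤ M ω)
    {q : ℝ} (hq0 : 0 < q) {ε : ℝ} (hε : 0 < ε) (u : ℝ) (k : ℕ) (t : ℝ) :
    (Tker μ M q)^[k]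
        (fun s => (ENNReal.ofReal s) ^ q * ((ENNReal.ofReal ε) ^ q + μ {ω | ε * s < R ω})) t
      ≤ (ENNReal.ofReal t) ^ q * (ENNReal.ofReal ε) ^ q
        + (ENNReal.ofReal u) ^ q * (∫⁻ ω, (ENNReal.ofReal (M ω)) ^ q ∂μ) ^ k
        + (ENNReal.ofReal t) ^ q * μ {ω | ε * u < R ω} := by
  set mq := ∫⁻ ω, (ENNReal.ofReal (M ω)) ^ q ∂μ with hmq
  set D := (ENNReal.ofReal ε) ^ q with hD
  set τ := μ {ω | ε * u < R ω} with hτ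
  have hprod : ∀ (s : ℝ) (ω : Ω),
      (ENNReal.ofReal (M ω)) ^ q * (ENNReal.ofReal (s / M ω)) ^ q ≤ (ENNReal.ofReal s) ^ q := by
    intro s ω
    rcases eq_or_lt_of_le (hMnn ω) with h|h
    · rw [← h]
      simp [ENNReal.zero_rpow_of_pos hq0]
    · rw [← ENNReal.mul_rpow_of_nonneg _ _ hq0.le, ← ENNReal.ofReal_mul (hMnn ω),
        mul_div_cancel₀ _ (ne_of_gt h)]
  induction k generalizing t with
  | zero =>
    simp only [Function.iterate_zero, id_eq, pow_zero, mul_one]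
    rcases le_total t u with h|h
    · have h1 : (ENNReal.ofReal t) ^ q * μ {ω | ε * t < R ω} ≤ (ENNReal.ofReal u) ^ q := by
        calc (ENNReal.ofReal t) ^ q * μ {ω | ε * t < R ω}
            ≤ (ENNReal.ofReal t) ^ q * 1 := mul_le_mul_right prob_le_one _
          _ ≤ (ENNReal.ofReal u) ^ q := by
              rw [mul_one]
              exact ENNReal.rpow_le_rpow (ENNReal.ofReal_le_ofReal h) hq0.le
      calc (ENNReal.ofReal t) ^ q * (D + μ {ω | ε * t < R ω})
          = (ENNReal.ofReal t) ^ q * D + (ENNReal.ofReal t) ^ q * μ {ω | ε * t < R ω} := by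
            ring
        _ ≤ (ENNReal.ofReal t) ^ q * D + (ENNReal.ofReal u) ^ q := add_le_add_right h1 _
        _ ≤ _ := le_add_right le_rfl
    · have h1 : μ {ω | ε * t < R ω} ≤ τ := by
        apply measure_mono
        intro ω hω
        exact lt_of_le_of_lt (mul_le_mul_of_nonneg_left h hε.le) hω
      calc (ENNReal.ofReal t) ^ q * (D + μ {ω | ε * t < R ω})
          = (ENNReal.ofReal t) ^ q * D + (ENNReal.ofReal t) ^ q * μ {ω | ε * t < R ω} := by ring
        _ ≤ (ENNReal.ofReal t) ^ q * D + (ENNReal.ofReal t) ^ q * τ :=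
            add_le_add_right (mul_le_mul_right h1 _) _
        _ ≤ _ := by
            rw [add_assoc]
            exact add_le_add_right (le_add_left le_rfl) _
  | succ k ih =>
    rw [Function.iterate_succ_apply']
    have hmeas0 : Measurable fun ω => (ENNReal.ofReal (M ω)) ^ q :=
      measurable_ennrpow hMmeas.ennreal_ofReal q
    have hmeasdiv : Measurable fun ω => (ENNReal.ofReal (t / M ω)) ^ q :=
      measurable_ennrpow (measurable_const.div hMmeas).ennreal_ofReal q
    have hmeas1 : Measurable fun ω =>
        (ENNReal.ofReal (M ω)) ^ q * ((ENNReal.ofReal (t / M ω)) ^ q * D) :=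
      hmeas0.mul (hmeasdiv.mul_const D)
    have hmeas2 : Measurable fun ω =>
        (ENNReal.ofReal (M ω)) ^ q * ((ENNReal.ofReal u) ^ q * mq ^ k) :=
      hmeas0.mul_const _
    calc Tker μ M q ((Tker μ M q)^[k]
          (fun s => (ENNReal.ofReal s) ^ q * (D + μ {ω | ε * s < R ω}))) t
        ≤ ∫⁻ ω, (ENNReal.ofReal (M ω)) ^ q *
            ((ENNReal.ofReal (t / M ω)) ^ q * D + (ENNReal.ofReal u) ^ q * mq ^ k
              + (ENNReal.ofReal (t / M ω)) ^ q * τ) ∂μ :=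
          lintegral_mono fun ω => mul_le_mul_right (ih (t / M ω)) _
      _ = (∫⁻ ω, (ENNReal.ofReal (M ω)) ^ q * ((ENNReal.ofReal (t / M ω)) ^ q * D) ∂μ)
          + ((∫⁻ ω, (ENNReal.ofReal (M ω)) ^ q * ((ENNReal.ofReal u) ^ q * mq ^ k) ∂μ)
          + (∫⁻ ω, (ENNReal.ofReal (M ω)) ^ q * ((ENNReal.ofReal (t / M ω)) ^ q * τ) ∂μ)) := by
          rw [← lintegral_add_left hmeas2, ← lintegral_add_left hmeas1]
          exact lintegral_congr fun ω => by ring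
      _ ≤ (ENNReal.ofReal t) ^ q * D
          + ((ENNReal.ofReal u) ^ q * mq ^ (k + 1) + (ENNReal.ofReal t) ^ q * τ) := by
          gcongr
          · calc ∫⁻ ω, (ENNReal.ofReal (M ω)) ^ q * ((ENNReal.ofReal (t / M ω)) ^ q * D) ∂μ
                ≤ ∫⁻ _, (ENNReal.ofReal t) ^ q * D ∂μ := by
                  apply lintegral_mono
                  intro ω
                  dsimp only
                  rw [← mul_assoc]
                  exact mul_le_mul_left (hprod t ω) D
              _ = (ENNReal.ofReal t) ^ q * D := by
                  rw [lintegral_const, measure_univ, mul_one]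
          · calc ∫⁻ ω, (ENNReal.ofReal (M ω)) ^ q * ((ENNReal.ofReal u) ^ q * mq ^ k) ∂μ
                = ((ENNReal.ofReal u) ^ q * mq ^ k) * mq := by
                  rw [lintegral_congr fun ω =>
                    mul_comm ((ENNReal.ofReal (M ω)) ^ q) ((ENNReal.ofReal u) ^ q * mq ^ k),
                    lintegral_const_mul _ hmeas0]
              _ ≤ (ENNReal.ofReal u) ^ q * mq ^ (k + 1) := le_of_eq (by ring)
          · calc ∫⁻ ω, (ENNReal.ofReal (M ω)) ^ q * ((ENNReal.ofReal (t / M ω)) ^ q * τ) ∂μ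
                ≤ ∫⁻ _, (ENNReal.ofReal t) ^ q * τ ∂μ := by
                  apply lintegral_mono
                  intro ω
                  dsimp only
                  rw [← mul_assoc]
                  exact mul_le_mul_left (hprod t ω) τ
              _ = (ENNReal.ofReal t) ^ q * τ := by
                  rw [lintegral_const, measure_univ, mul_one]
      _ = _ := by rw [← add_assoc]

/-- One-step inequality: `‖min(R,t)‖_q ≤ ‖Q‖_q + (T F t)^{1/q}`. -/
lemma one_step (μ : Measure Ω) [IsProbabilityMeasure μ]
    (R R' M Q : Ω → ℝ)
    (hRmeas : Measurable R) (hR'meas : Measurable R') (hMmeas : Measurable M)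
    (hQmeas : Measurable Q)
    (hR'nn : ∀ ω, 0 ≤ R' ω)
    (hMnn : ∀ ω, 0 ≤ M ω) (hQnn : ∀ ω, 0 ≤ Q ω)
    (hcopy : Measure.map R' μ = Measure.map R μ)
    (hindep : IndepFun R' (fun ω => (M ω, Q ω)) μ)
    (hdist : Measure.map R μ = Measure.map (fun ω => Q ω + M ω * R' ω) μ)
    {q : ℝ} (hq : 1 ≤ q) (t : ℝ) (ht : 0 ≤ t) :
    (∫⁻ ω, (ENNReal.ofReal (min (R ω) t)) ^ q ∂μ) ^ (1/q)
      ≤ (∫⁻ ω, (ENNReal.ofReal (Q ω)) ^ q ∂μ) ^ (1/q)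
        + (Tker μ M q (fun s => ∫⁻ ω, (ENNReal.ofReal (min (R ω) s)) ^ q ∂μ) t) ^ (1/q) := by
  have hq0 : (0:ℝ) < q := lt_of_lt_of_le zero_lt_one hq
  set F : ℝ → ℝ≥0∞ := fun s => ∫⁻ ω, (ENNReal.ofReal (min (R ω) s)) ^ q ∂μ with hF
  have hgmeas : Measurable fun x : ℝ => (ENNReal.ofReal (min x t)) ^ q :=
    measurable_ennrpow (measurable_id.min measurable_const).ennreal_ofReal q
  have hsum_meas : Measurable fun ω => Q ω + M ω * R' ω :=
    hQmeas.add (hMmeas.mul hR'meas)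
  have h1 : F t = ∫⁻ ω, (ENNReal.ofReal (min (Q ω + M ω * R' ω) t)) ^ q ∂μ := by
    calc F t = ∫⁻ x, (ENNReal.ofReal (min x t)) ^ q ∂(Measure.map R μ) :=
          (lintegral_map hgmeas hRmeas).symm
      _ = ∫⁻ x, (ENNReal.ofReal (min x t)) ^ q
            ∂(Measure.map (fun ω => Q ω + M ω * R' ω) μ) := by rw [hdist]
      _ = _ := lintegral_map hgmeas hsum_meas
  have h2 : ∀ ω, ENNReal.ofReal (min (Q ω + M ω * R' ω) t)
      ≤ ENNReal.ofReal (Q ω) + ENNReal.ofReal (M ω * min (R' ω) (t / M ω)) := by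
    intro ω
    rw [← ENNReal.ofReal_add (hQnn ω)
      (mul_nonneg (hMnn ω) (le_min (hR'nn ω) (div_nonneg ht (hMnn ω))))]
    apply ENNReal.ofReal_le_ofReal
    rcases eq_or_lt_of_le (hMnn ω) with hM0|hM0
    · rw [← hM0]
      simp only [zero_mul, mul_zero, add_zero, zero_add]
      exact min_le_left _ _
    · have hmm : M ω * min (R' ω) (t / M ω) = min (M ω * R' ω) t := by
        rw [mul_min_of_nonneg _ _ (le_of_lt hM0), mul_div_cancel₀ _ (ne_of_gt hM0)]
      rw [hmm]
      rcases le_total (M ω * R' ω) t with h|h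
      · rw [min_eq_left h]
        exact min_le_left _ _
      · rw [min_eq_right h]
        calc min (Q ω + M ω * R' ω) t ≤ t := min_le_right _ _
          _ ≤ Q ω + t := le_add_of_nonneg_left (hQnn ω)
  set f : Ω → ℝ≥0∞ := fun ω => ENNReal.ofReal (Q ω) with hfd
  set g : Ω → ℝ≥0∞ := fun ω => ENNReal.ofReal (M ω * min (R' ω) (t / M ω)) with hgd
  have hfm : Measurable f := hQmeas.ennreal_ofReal
  have hgm : Measurable g :=
    ((hMmeas.mul (hR'meas.min (measurable_const.div hMmeas))).ennreal_ofReal)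
  have h3 : F t ^ (1/q) ≤ (∫⁻ ω, f ω ^ q ∂μ) ^ (1/q) + (∫⁻ ω, g ω ^ q ∂μ) ^ (1/q) := by
    refine le_trans ?_ (ENNReal.lintegral_Lp_add_le hfm.aemeasurable hgm.aemeasurable hq)
    apply ENNReal.rpow_le_rpow _ (by positivity)
    rw [h1]
    exact lintegral_mono fun ω => ENNReal.rpow_le_rpow (h2 ω) hq0.le
  have hFmono : Monotone F := by
    intro s₁ s₂ hs
    exact lintegral_mono fun ω =>
      ENNReal.rpow_le_rpow (ENNReal.ofReal_le_ofReal (min_le_min le_rfl hs)) hq0.le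
  have hFmeas : Measurable F := hFmono.measurable
  have h4 : (∫⁻ ω, g ω ^ q ∂μ) = Tker μ M q F t := by
    have hind : IndepFun M R' μ := (hindep.comp measurable_id measurable_fst).symm
    have hprobM : IsProbabilityMeasure (μ.map M) := Measure.isProbabilityMeasure_map hMmeas.aemeasurable
    have hprobR : IsProbabilityMeasure (μ.map R) := Measure.isProbabilityMeasure_map hRmeas.aemeasurable
    have hmap : μ.map (fun ω => (M ω, R' ω)) = (μ.map M).prod (μ.map R') :=
      (indepFun_iff_map_prod_eq_prod_map_map hMmeas.aemeasurable hR'meas.aemeasurable).mp hind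
    set h : ℝ × ℝ → ℝ≥0∞ := fun x => (ENNReal.ofReal (x.1 * min x.2 (t / x.1))) ^ q with hh
    have hhmeas : Measurable h :=
      measurable_ennrpow ((measurable_fst.mul
        (measurable_snd.min (measurable_const.div measurable_fst))).ennreal_ofReal) q
    have e1 : (∫⁻ ω, g ω ^ q ∂μ) = ∫⁻ x, h x ∂((μ.map M).prod (μ.map R)) := by
      rw [← hcopy, ← hmap]
      exact (lintegral_map hhmeas (hMmeas.prodMk hR'meas)).symm
    have e2 : ∫⁻ x, h x ∂((μ.map M).prod (μ.map R))
        = ∫⁻ m, ∫⁻ r, h (m, r) ∂(μ.map R) ∂(μ.map M) :=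
      lintegral_prod h hhmeas.aemeasurable
    have hae : ∀ᵐ m ∂(μ.map M), m ∈ Set.Ici (0:ℝ) :=
      (ae_map_iff hMmeas.aemeasurable measurableSet_Ici).mpr (ae_of_all _ hMnn)
    have e3 : ∫⁻ m, ∫⁻ r, h (m, r) ∂(μ.map R) ∂(μ.map M)
        = ∫⁻ m, (ENNReal.ofReal m) ^ q * F (t / m) ∂(μ.map M) := by
      apply lintegral_congr_ae
      filter_upwards [hae] with m hm
      have hm'' : Measurable fun r : ℝ => h (m, r) := by
        have hrw : (fun r : ℝ => h (m, r))
            = fun r : ℝ => (ENNReal.ofReal (m * min r (t / m))) ^ q := rfl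
        rw [hrw]
        exact measurable_ennrpow ((measurable_const.mul
          (measurable_id.min measurable_const)).ennreal_ofReal) q
      calc ∫⁻ r, h (m, r) ∂(μ.map R)
          = ∫⁻ ω, (ENNReal.ofReal (m * min (R ω) (t / m))) ^ q ∂μ := lintegral_map hm'' hRmeas
        _ = ∫⁻ ω, (ENNReal.ofReal m) ^ q * (ENNReal.ofReal (min (R ω) (t / m))) ^ q ∂μ := by
            apply lintegral_congr
            intro ω
            rw [ENNReal.ofReal_mul hm, ENNReal.mul_rpow_of_nonneg _ _ hq0.le]
        _ = (ENNReal.ofReal m) ^ q * F (t / m) :=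
            lintegral_const_mul _
              (measurable_ennrpow (hRmeas.min measurable_const).ennreal_ofReal q)
    have e4 : ∫⁻ m, (ENNReal.ofReal m) ^ q * F (t / m) ∂(μ.map M) = Tker μ M q F t :=
      lintegral_map ((measurable_ennrpow measurable_id.ennreal_ofReal q).mul
        (hFmeas.comp (measurable_const.div measurable_id))) hMmeas
    rw [e1, e2, e3, e4]
  rw [← h4]
  exact h3

end Stmt7Aux


/-- If `R ≥ 0` satisfies `R =_d Q + M·R'` with `R'` a copy of `R` independent of
`(M, Q)`, `M, Q ≥ 0`, and `‖M‖_q < 1`, `‖Q‖_q < ∞` (with `q ≥ 1` so that Minkowski's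
inequality applies), then `‖R‖_q ≤ ‖Q‖_q / (1 - ‖M‖_q)`. -/
theorem stmt_7 {Ω : Type*} [MeasurableSpace Ω] (μ : Measure Ω) [IsProbabilityMeasure μ]
    (R R' M Q : Ω → ℝ)
    (hRmeas : Measurable R) (hR'meas : Measurable R') (hMmeas : Measurable M)
    (hQmeas : Measurable Q)
    (hRnn : ∀ ω, 0 ≤ R ω) (hR'nn : ∀ ω, 0 ≤ R' ω)
    (hMnn : ∀ ω, 0 ≤ M ω) (hQnn : ∀ ω, 0 ≤ Q ω)
    (hcopy : Measure.map R' μ = Measure.map R μ)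
    (hindep : IndepFun R' (fun ω => (M ω, Q ω)) μ)
    (hdist : Measure.map R μ = Measure.map (fun ω => Q ω + M ω * R' ω) μ)
    {q : ℝ} (hq : 1 ≤ q)
    (hM : eLpNorm M (ENNReal.ofReal q) μ < 1)
    (hQ : eLpNorm Q (ENNReal.ofReal q) μ < ⊤) :
    eLpNorm R (ENNReal.ofReal q) μ ≤
      eLpNorm Q (ENNReal.ofReal q) μ / (1 - eLpNorm M (ENNReal.ofReal q) μ) := by
  classical
  have hq0 : (0:ℝ) < q := lt_of_lt_of_le zero_lt_one hq
  have hqne : q ≠ 0 := ne_of_gt hq0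
  set p : ℝ≥0∞ := ENNReal.ofReal q with hp
  have hp0 : p ≠ 0 := by
    simp only [hp, ne_eq, ENNReal.ofReal_eq_zero, not_le]
    exact hq0
  have hpt : p ≠ ⊤ := ENNReal.ofReal_ne_top
  have hptoReal : p.toReal = q := ENNReal.toReal_ofReal hq0.le
  -- convert eLpNorm to lintegral form
  have norm_eq : ∀ (f : Ω → ℝ), (∀ ω, 0 ≤ f ω) →
      eLpNorm f p μ = (∫⁻ ω, (ENNReal.ofReal (f ω)) ^ q ∂μ) ^ (1/q) := by
    intro f hf
    rw [eLpNorm_eq_lintegral_rpow_enorm_toReal hp0 hpt, hptoReal]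
    congr 1
    exact lintegral_congr fun ω => by rw [Real.enorm_eq_ofReal (hf ω)]
  set F : ℝ → ℝ≥0∞ := fun s => ∫⁻ ω, (ENNReal.ofReal (min (R ω) s)) ^ q ∂μ with hF
  set mq : ℝ≥0∞ := ∫⁻ ω, (ENNReal.ofReal (M ω)) ^ q ∂μ with hmqdef
  set Cq : ℝ≥0∞ := ∫⁻ ω, (ENNReal.ofReal (Q ω)) ^ q ∂μ with hCqdef
  have hMnorm : eLpNorm M p μ = mq ^ (1/q) := norm_eq M hMnn
  have hQnorm : eLpNorm Q p μ = Cq ^ (1/q) := norm_eq Q hQnn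
  have hm1 : mq ^ (1/q) < 1 := hMnorm ▸ hM
  have hmq1 : mq < 1 := by
    have := ENNReal.rpow_lt_one hm1 hq0
    rwa [Stmt7Aux.rpow_inv_rpow hqne] at this
  have hFmono : Monotone F := by
    intro s₁ s₂ hs
    exact lintegral_mono fun ω =>
      ENNReal.rpow_le_rpow (ENNReal.ofReal_le_ofReal (min_le_min le_rfl hs)) hq0.le
  have hF0 : ∀ s : ℝ, s < 0 → F s = 0 := by
    intro s hs
    have : ∀ ω, (ENNReal.ofReal (min (R ω) s)) ^ q = 0 := by
      intro ω
      rw [ENNReal.ofReal_eq_zero.mpr (le_of_lt (lt_of_le_of_lt (min_le_right _ _) hs)),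
        ENNReal.zero_rpow_of_pos hq0]
    simp only [hF, this, lintegral_zero]
  set K : ℝ≥0∞ := Cq ^ (1/q) * (1 - mq ^ (1/q))⁻¹ with hK
  -- the iterated inequality
  have keyD : ∀ (k : ℕ) (t : ℝ), 0 ≤ t →
      F t ^ (1/q) ≤ Cq ^ (1/q) * (∑ i ∈ Finset.range k, (mq ^ (1/q)) ^ i)
        + ((Stmt7Aux.Tker μ M q)^[k] F t) ^ (1/q) := by
    intro k
    induction k with
    | zero =>
      intro t ht
      simp
    | succ k ih =>
      intro t ht
      have hH : Monotone ((Stmt7Aux.Tker μ M q)^[k] F) :=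
        Stmt7Aux.Tker_iterate_monotone μ hMnn q hFmono k
      set Sk : ℝ≥0∞ := ∑ i ∈ Finset.range k, (mq ^ (1/q)) ^ i with hSk
      have hstep : ∀ s, F s ≤
          ((Cq ^ (1/q) * Sk) + (((Stmt7Aux.Tker μ M q)^[k] F) s ^ (1/q))) ^ q := by
        intro s
        rcases le_or_gt 0 s with hs|hs
        · calc F s = (F s ^ (1/q)) ^ q := (Stmt7Aux.rpow_inv_rpow hqne).symm
            _ ≤ _ := ENNReal.rpow_le_rpow (ih s hs) hq0.le
        · rw [hF0 s hs]
          exact zero_le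
      have h5 := Stmt7Aux.Tker_minkowski μ hMmeas hq hH.measurable (Cq ^ (1/q) * Sk) hstep t
      calc F t ^ (1/q)
          ≤ Cq ^ (1/q) + (Stmt7Aux.Tker μ M q F t) ^ (1/q) :=
            Stmt7Aux.one_step μ R R' M Q hRmeas hR'meas hMmeas hQmeas hR'nn hMnn hQnn
              hcopy hindep hdist hq t ht
        _ ≤ Cq ^ (1/q) + ((Cq ^ (1/q) * Sk * mq ^ (1/q)
              + (((Stmt7Aux.Tker μ M q)^[k+1] F t) ^ (1/q))) ^ q) ^ (1/q) := by
            apply add_le_add_right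
            apply ENNReal.rpow_le_rpow _ (by positivity : (0:ℝ) ≤ 1/q)
            rw [Function.iterate_succ_apply']
            exact h5
        _ = Cq ^ (1/q) + (Cq ^ (1/q) * Sk * mq ^ (1/q)
              + (((Stmt7Aux.Tker μ M q)^[k+1] F t) ^ (1/q))) := by
            rw [Stmt7Aux.rpow_rpow_inv hqne]
        _ = Cq ^ (1/q) * (∑ i ∈ Finset.range (k+1), (mq ^ (1/q)) ^ i)
              + (((Stmt7Aux.Tker μ M q)^[k+1] F t) ^ (1/q)) := by
            rw [geom_sum_succ]
            ring
  -- F is dominated by the explicit bounding function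
  have hFleG0 : ∀ (ε : ℝ), 0 < ε → ∀ s : ℝ,
      F s ≤ (ENNReal.ofReal s) ^ q * ((ENNReal.ofReal ε) ^ q + μ {ω | ε * s < R ω}) := by
    intro ε hε0 s
    rcases lt_or_ge s 0 with hs|hs
    · rw [hF0 s hs]
      exact zero_le
    · calc F s ≤ ∫⁻ ω, ((ENNReal.ofReal (ε * s)) ^ q
            + Set.indicator {ω | ε * s < R ω} (fun _ => (ENNReal.ofReal s) ^ q) ω) ∂μ := by
            apply lintegral_mono
            intro ω
            dsimp only
            by_cases h : ε * s < R ω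
            · rw [Set.indicator_of_mem (show ω ∈ {ω | ε * s < R ω} from h)]
              exact le_add_left
                (ENNReal.rpow_le_rpow (ENNReal.ofReal_le_ofReal (min_le_right _ _)) hq0.le)
            · rw [Set.indicator_of_notMem (show ω ∉ {ω | ε * s < R ω} from h), add_zero]
              push_neg at h
              exact ENNReal.rpow_le_rpow
                (ENNReal.ofReal_le_ofReal (le_trans (min_le_left _ _) h)) hq0.le
      _ = (ENNReal.ofReal (ε * s)) ^ q + (ENNReal.ofReal s) ^ q * μ {ω | ε * s < R ω} := by
          rw [lintegral_add_left measurable_const, lintegral_const, measure_univ, mul_one,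
            lintegral_indicator_const
              (show MeasurableSet {ω | ε * s < R ω} from hRmeas measurableSet_Ioi)]
      _ = (ENNReal.ofReal s) ^ q * ((ENNReal.ofReal ε) ^ q + μ {ω | ε * s < R ω}) := by
          rw [ENNReal.ofReal_mul hε0.le, ENNReal.mul_rpow_of_nonneg _ _ hq0.le]
          ring
  -- geometric sum bound
  have hCS : ∀ k : ℕ, Cq ^ (1/q) * (∑ i ∈ Finset.range k, (mq ^ (1/q)) ^ i) ≤ K := by
    intro k
    apply mul_le_mul_right
    exact le_trans (ENNReal.sum_le_tsum _) (ENNReal.tsum_geometric _).le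
  -- the final per-level bound
  have final : ∀ t : ℝ, 0 ≤ t → F t ^ (1/q) ≤ K := by
    intro t ht
    apply ENNReal.le_of_forall_pos_le_add
    intro η hη hKtop
    set η' : ℝ := (η : ℝ) / 3 with hη'def
    have hη' : 0 < η' := by positivity
    -- choose ε
    set ε : ℝ := min 1 (η' / (t + 1)) with hεdef
    have hε0 : 0 < ε := lt_min one_pos (by positivity)
    have hterm1 : ENNReal.ofReal t * ENNReal.ofReal ε ≤ ENNReal.ofReal η' := by
      rw [← ENNReal.ofReal_mul ht]
      apply ENNReal.ofReal_le_ofReal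
      have h1 : t * ε ≤ t * (η' / (t + 1)) :=
        mul_le_mul_of_nonneg_left (min_le_right _ _) ht
      have h2 : t * (η' / (t + 1)) ≤ η' := by
        rw [mul_div_assoc', div_le_iff₀ (by linarith : (0:ℝ) < t + 1)]
        nlinarith
      linarith
    -- choose u = N
    set δ : ℝ≥0∞ := (ENNReal.ofReal η' / (ENNReal.ofReal t + 1)) ^ q with hδdef
    have hδ0 : 0 < δ := by
      apply ENNReal.rpow_pos
      · exact ENNReal.div_pos (ne_of_gt (ENNReal.ofReal_pos.mpr hη'))
          (by simp [ENNReal.add_eq_top])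
      · exact (ENNReal.div_lt_top ENNReal.ofReal_ne_top (by simp)).ne
    have htail : Tendsto (fun n : ℕ => μ {ω | ε * (n:ℝ) < R ω}) atTop (nhds 0) := by
      have hms : ∀ n : ℕ, MeasurableSet {ω | ε * (n:ℝ) < R ω} :=
        fun n => hRmeas measurableSet_Ioi
      have hanti : Antitone fun n : ℕ => {ω | ε * (n:ℝ) < R ω} := by
        intro n m hnm ω hω
        exact lt_of_le_of_lt
          (mul_le_mul_of_nonneg_left (Nat.cast_le.mpr hnm) hε0.le) hω
      have hempty : ⋂ n : ℕ, {ω | ε * (n:ℝ) < R ω} = ∅ := by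
        ext ω
        simp only [Set.mem_iInter, Set.mem_setOf_eq, Set.mem_empty_iff_false, iff_false,
          not_forall, not_lt]
        obtain ⟨n, hn⟩ := exists_nat_ge (R ω / ε)
        exact ⟨n, by rw [mul_comm]; exact (div_le_iff₀ hε0).mp hn⟩
      have := tendsto_measure_iInter_atTop (μ := μ)
        (fun n => (hms n).nullMeasurableSet) hanti ⟨0, measure_ne_top μ _⟩
      rwa [hempty, measure_empty] at this
    obtain ⟨N, hN⟩ := (htail.eventually_lt_const hδ0).exists
    set u : ℝ := (N : ℝ) with hudef
    have hterm3 : ENNReal.ofReal t * (μ {ω | ε * u < R ω}) ^ (1/q) ≤ ENNReal.ofReal η' := by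
      calc ENNReal.ofReal t * (μ {ω | ε * u < R ω}) ^ (1/q)
          ≤ ENNReal.ofReal t * δ ^ (1/q) :=
            mul_le_mul_right (ENNReal.rpow_le_rpow hN.le (by positivity)) _
        _ = ENNReal.ofReal t * (ENNReal.ofReal η' / (ENNReal.ofReal t + 1)) := by
            rw [hδdef, Stmt7Aux.rpow_rpow_inv hqne]
        _ ≤ (ENNReal.ofReal t + 1) * (ENNReal.ofReal η' / (ENNReal.ofReal t + 1)) :=
            mul_le_mul_left le_self_add _
        _ = ENNReal.ofReal η' := ENNReal.mul_div_cancel (by simp) (by simp)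
    -- choose k
    set δ₂ : ℝ≥0∞ := (ENNReal.ofReal η' / (ENNReal.ofReal u + 1)) ^ q with hδ₂def
    have hδ₂0 : 0 < δ₂ := by
      apply ENNReal.rpow_pos
      · exact ENNReal.div_pos (ne_of_gt (ENNReal.ofReal_pos.mpr hη')) (by simp)
      · exact (ENNReal.div_lt_top ENNReal.ofReal_ne_top (by simp)).ne
    have hpowtend : Tendsto (fun k : ℕ => mq ^ k) atTop (nhds 0) :=
      ENNReal.tendsto_pow_atTop_nhds_zero_of_lt_one hmq1
    obtain ⟨k, hk⟩ := (hpowtend.eventually_lt_const hδ₂0).exists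
    have hterm2 : ENNReal.ofReal u * (mq ^ k) ^ (1/q) ≤ ENNReal.ofReal η' := by
      calc ENNReal.ofReal u * (mq ^ k) ^ (1/q)
          ≤ ENNReal.ofReal u * δ₂ ^ (1/q) :=
            mul_le_mul_right (ENNReal.rpow_le_rpow hk.le (by positivity)) _
        _ = ENNReal.ofReal u * (ENNReal.ofReal η' / (ENNReal.ofReal u + 1)) := by
            rw [hδ₂def, Stmt7Aux.rpow_rpow_inv hqne]
        _ ≤ (ENNReal.ofReal u + 1) * (ENNReal.ofReal η' / (ENNReal.ofReal u + 1)) :=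
            mul_le_mul_left le_self_add _
        _ = ENNReal.ofReal η' := ENNReal.mul_div_cancel (by simp) (by simp)
    -- assemble
    have hchain := keyD k t ht
    have hcmp := Stmt7Aux.Tker_iterate_mono_fun μ M q (hFleG0 ε hε0) k t
    have htail2 := Stmt7Aux.Tker_iterate_tail μ R hMmeas hMnn hq0 hε0 u k t
    have htriple : (((Stmt7Aux.Tker μ M q)^[k] F t) : ℝ≥0∞) ^ (1/q)
        ≤ ENNReal.ofReal t * ENNReal.ofReal ε + ENNReal.ofReal u * (mq ^ k) ^ (1/q)
          + ENNReal.ofReal t * (μ {ω | ε * u < R ω}) ^ (1/q) := by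
      have hle : ((Stmt7Aux.Tker μ M q)^[k] F t)
          ≤ (ENNReal.ofReal t) ^ q * (ENNReal.ofReal ε) ^ q
            + (ENNReal.ofReal u) ^ q * mq ^ k
            + (ENNReal.ofReal t) ^ q * μ {ω | ε * u < R ω} :=
        le_trans hcmp htail2
      have h1q : (0:ℝ) ≤ 1/q := by positivity
      have h1q' : 1/q ≤ 1 := by
        rw [div_le_one hq0]
        exact hq
      calc ((Stmt7Aux.Tker μ M q)^[k] F t) ^ (1/q)
          ≤ ((ENNReal.ofReal t) ^ q * (ENNReal.ofReal ε) ^ q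
              + (ENNReal.ofReal u) ^ q * mq ^ k
              + (ENNReal.ofReal t) ^ q * μ {ω | ε * u < R ω}) ^ (1/q) :=
            ENNReal.rpow_le_rpow hle h1q
        _ ≤ ((ENNReal.ofReal t) ^ q * (ENNReal.ofReal ε) ^ q
              + (ENNReal.ofReal u) ^ q * mq ^ k) ^ (1/q)
            + ((ENNReal.ofReal t) ^ q * μ {ω | ε * u < R ω}) ^ (1/q) :=
            ENNReal.rpow_add_le_add_rpow _ _ h1q h1q'
        _ ≤ ((ENNReal.ofReal t) ^ q * (ENNReal.ofReal ε) ^ q) ^ (1/q)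
            + ((ENNReal.ofReal u) ^ q * mq ^ k) ^ (1/q)
            + ((ENNReal.ofReal t) ^ q * μ {ω | ε * u < R ω}) ^ (1/q) := by
            apply add_le_add_left
            exact ENNReal.rpow_add_le_add_rpow _ _ h1q h1q'
        _ = ENNReal.ofReal t * ENNReal.ofReal ε + ENNReal.ofReal u * (mq ^ k) ^ (1/q)
            + ENNReal.ofReal t * (μ {ω | ε * u < R ω}) ^ (1/q) := by
            rw [ENNReal.mul_rpow_of_nonneg _ _ h1q, ENNReal.mul_rpow_of_nonneg _ _ h1q,
              ENNReal.mul_rpow_of_nonneg _ _ h1q,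
              Stmt7Aux.rpow_rpow_inv hqne, Stmt7Aux.rpow_rpow_inv hqne,
              Stmt7Aux.rpow_rpow_inv hqne]
    calc F t ^ (1/q)
        ≤ Cq ^ (1/q) * (∑ i ∈ Finset.range k, (mq ^ (1/q)) ^ i)
          + ((Stmt7Aux.Tker μ M q)^[k] F t) ^ (1/q) := hchain
      _ ≤ K + (ENNReal.ofReal η' + ENNReal.ofReal η' + ENNReal.ofReal η') := by
          apply add_le_add (hCS k)
          exact le_trans htriple (add_le_add (add_le_add hterm1 hterm2) hterm3)
      _ = K + η := by
          rw [← ENNReal.ofReal_add hη'.le hη'.le, ← ENNReal.ofReal_add (by positivity) hη'.le]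
          congr 1
          rw [show η' + η' + η' = (η:ℝ) by rw [hη'def]; ring]
          exact ENNReal.ofReal_coe_nnreal
  -- conclude by monotone convergence
  have hsup : (∫⁻ ω, (ENNReal.ofReal (R ω)) ^ q ∂μ) = ⨆ n : ℕ, F (n:ℝ) := by
    rw [← lintegral_iSup (fun n : ℕ =>
      Stmt7Aux.measurable_ennrpow (hRmeas.min measurable_const).ennreal_ofReal q)
      (fun n m hnm ω => ENNReal.rpow_le_rpow
        (ENNReal.ofReal_le_ofReal (min_le_min le_rfl (Nat.cast_le.mpr hnm))) hq0.le)]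
    apply lintegral_congr
    intro ω
    apply le_antisymm
    · refine le_iSup_of_le ⌈R ω⌉₊ ?_
      rw [min_eq_left (Nat.le_ceil _)]
    · exact iSup_le fun n =>
        ENNReal.rpow_le_rpow (ENNReal.ofReal_le_ofReal (min_le_left _ _)) hq0.le
  have hfinal : eLpNorm R p μ ≤ K := by
    rw [norm_eq R hRnn, hsup]
    have : (⨆ n : ℕ, F (n:ℝ)) ≤ K ^ q := by
      apply iSup_le
      intro n
      calc F (n:ℝ) = (F (n:ℝ) ^ (1/q)) ^ q := (Stmt7Aux.rpow_inv_rpow hqne).symm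
        _ ≤ K ^ q := ENNReal.rpow_le_rpow (final _ (Nat.cast_nonneg n)) hq0.le
    calc (⨆ n : ℕ, F (n:ℝ)) ^ (1/q) ≤ (K ^ q) ^ (1/q) :=
          ENNReal.rpow_le_rpow this (by positivity)
      _ = K := Stmt7Aux.rpow_rpow_inv hqne
  rw [hQnorm, hMnorm] at *
  rw [div_eq_mul_inv]
  exact hfinal
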